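/- Let p and q be probability densities on ℝ such that p is light-tailed and q is heavy-tailed, and let T : ℝ → ℝ be an increasing C¹ diffeomorphism with q = T#p. Then the derivative of T is unbounded along the right tail: for every M > 0 and every z₀ > 0 there exists z > z₀ with T'(z) > M. -/

import Mathlib

open MeasureTheory Filter Topology Set

/-- If `p` is a light-tailed probability density on ℝ, `q` is a
heavy-tailed probability density on ℝ, and `T` is an increasing C¹ diffeomorphism
pushing `p` forward to `q`, then the derivative of `T` is unbounded along the right
tail: for every `M > 0` and `z₀ > 0` there is `z > z₀` with `T'(z) > M`. -/
theorem tails_of_increasing_diffeo_unbounded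
    (p q T : ℝ → ℝ)
    (hp_meas : Measurable p) (hp_nonneg : ∀ z, 0 ≤ p z)
    (hp_prob : ∫⁻ z, ENNReal.ofReal (p z) = 1)
    (hq_meas : Measurable q) (hq_nonneg : ∀ x, 0 ≤ q x)
    (hq_prob : ∫⁻ x, ENNReal.ofReal (q x) = 1)
    (hp_light : ∃ l > (0:ℝ), ∫⁻ z, ENNReal.ofReal (Real.exp (l * z) * p z) < ⊤)
    (hq_heavy : ∀ l > (0:ℝ), ∫⁻ x, ENNReal.ofReal (Real.exp (l * x) * q x) = ⊤)
    (hT_mono : StrictMono T) (hT_smooth : ContDiff ℝ 1 T)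
    (hT_bij : Function.Bijective T) (hT_deriv_pos : ∀ z, 0 < deriv T z)
    (hpush : Measure.map T (volume.withDensity fun z => ENNReal.ofReal (p z))
      = volume.withDensity fun x => ENNReal.ofReal (q x)) :
    ∀ M > (0:ℝ), ∀ z₀ > (0:ℝ), ∃ z > z₀, deriv T z > M := by
  by_contra hcon
  push_neg at hcon
  obtain ⟨M, hM, z₀, hz₀, hbd⟩ := hcon
  obtain ⟨l, hl, hp_int⟩ := hp_light
  set lam := l / M with hlam
  have hlam_pos : 0 < lam := div_pos hl hM
  have hlamM : lam * M = l := div_mul_cancel₀ l (ne_of_gt hM)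
  -- linear growth of T beyond z₀
  have hgrow : ∀ z ≥ z₀, T z ≤ T z₀ + M * (z - z₀) := by
    intro z hz
    rcases eq_or_lt_of_le hz with h | h
    · simp [← h]
    · obtain ⟨c, hc, hc'⟩ := exists_deriv_eq_slope T h
        (hT_smooth.continuous.continuousOn)
        ((hT_smooth.differentiable one_ne_zero).differentiableOn)
      have hcM : deriv T c ≤ M := hbd c hc.1
      rw [hc'] at hcM
      have hzz : 0 < z - z₀ := sub_pos.mpr h
      have : T z - T z₀ ≤ M * (z - z₀) := by
        rw [div_le_iff₀ hzz] at hcM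
        linarith
      linarith
  -- pointwise exponential bound
  set C := Real.exp (lam * T z₀ - l * z₀) with hC
  set D := Real.exp (lam * T z₀) with hD
  have hpt : ∀ z, Real.exp (lam * T z) ≤ C * Real.exp (l * z) + D := by
    intro z
    rcases le_or_gt z₀ z with h | h
    · have h1 : lam * T z ≤ lam * (T z₀ + M * (z - z₀)) :=
        mul_le_mul_of_nonneg_left (hgrow z h) hlam_pos.le
      have h2 : lam * (T z₀ + M * (z - z₀)) = (lam * T z₀ - l * z₀) + l * z := by
        linear_combination (z - z₀) * hlamM
      have : Real.exp (lam * T z) ≤ C * Real.exp (l * z) := by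
        rw [hC, ← Real.exp_add]
        exact Real.exp_le_exp.mpr (by rw [← h2]; exact h1)
      have hDpos : 0 < D := Real.exp_pos _
      linarith
    · have : Real.exp (lam * T z) ≤ D := by
        rw [hD]
        exact Real.exp_le_exp.mpr
          (mul_le_mul_of_nonneg_left (hT_mono.le_iff_le.mpr h.le) hlam_pos.le)
      have : (0:ℝ) ≤ C * Real.exp (l * z) :=
        mul_nonneg (Real.exp_pos _).le (Real.exp_pos _).le
      linarith [Real.exp_le_exp.mpr
        (mul_le_mul_of_nonneg_left (hT_mono.le_iff_le.mpr h.le) hlam_pos.le)]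
  -- measurability
  have hmg : Measurable fun x : ℝ => ENNReal.ofReal (Real.exp (lam * x)) := by
    fun_prop
  have hmT : Measurable fun z : ℝ => ENNReal.ofReal (Real.exp (lam * T z)) := by
    have := hT_smooth.continuous.measurable
    fun_prop
  -- change of variables
  have key : (∫⁻ x, ENNReal.ofReal (Real.exp (lam * x) * q x))
      = ∫⁻ z, ENNReal.ofReal (Real.exp (lam * T z) * p z) := by
    calc (∫⁻ x, ENNReal.ofReal (Real.exp (lam * x) * q x))
        = ∫⁻ x, ENNReal.ofReal (q x) * ENNReal.ofReal (Real.exp (lam * x)) := by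
          simp_rw [ENNReal.ofReal_mul (Real.exp_nonneg _), mul_comm]
      _ = ∫⁻ x, ENNReal.ofReal (Real.exp (lam * x))
            ∂(volume.withDensity fun x => ENNReal.ofReal (q x)) := by
          rw [lintegral_withDensity_eq_lintegral_mul _ hq_meas.ennreal_ofReal hmg]
          rfl
      _ = ∫⁻ x, ENNReal.ofReal (Real.exp (lam * x))
            ∂(Measure.map T (volume.withDensity fun z => ENNReal.ofReal (p z))) := by
          rw [hpush]
      _ = ∫⁻ z, ENNReal.ofReal (Real.exp (lam * T z))
            ∂(volume.withDensity fun z => ENNReal.ofReal (p z)) :=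
          lintegral_map hmg hT_smooth.continuous.measurable
      _ = ∫⁻ z, ENNReal.ofReal (p z) * ENNReal.ofReal (Real.exp (lam * T z)) := by
          rw [lintegral_withDensity_eq_lintegral_mul _ hp_meas.ennreal_ofReal hmT]
          rfl
      _ = ∫⁻ z, ENNReal.ofReal (Real.exp (lam * T z) * p z) := by
          simp_rw [ENNReal.ofReal_mul (Real.exp_nonneg _), mul_comm]
  -- finiteness
  have hfin : (∫⁻ z, ENNReal.ofReal (Real.exp (lam * T z) * p z)) < ⊤ := by
    have hb : ∀ z, ENNReal.ofReal (Real.exp (lam * T z) * p z)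
        ≤ ENNReal.ofReal C * ENNReal.ofReal (Real.exp (l * z) * p z)
          + ENNReal.ofReal D * ENNReal.ofReal (p z) := by
      intro z
      have h1 : Real.exp (lam * T z) * p z
          ≤ C * (Real.exp (l * z) * p z) + D * p z := by
        have := hpt z
        nlinarith [hp_nonneg z, Real.exp_pos (lam * T z)]
      calc ENNReal.ofReal (Real.exp (lam * T z) * p z)
          ≤ ENNReal.ofReal (C * (Real.exp (l * z) * p z) + D * p z) :=
            ENNReal.ofReal_le_ofReal h1
        _ ≤ ENNReal.ofReal (C * (Real.exp (l * z) * p z))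
              + ENNReal.ofReal (D * p z) := ENNReal.ofReal_add_le
        _ = ENNReal.ofReal C * ENNReal.ofReal (Real.exp (l * z) * p z)
              + ENNReal.ofReal D * ENNReal.ofReal (p z) := by
            rw [hC, hD, ENNReal.ofReal_mul (Real.exp_pos _).le,
              ENNReal.ofReal_mul (Real.exp_pos _).le,
              ENNReal.ofReal_mul (Real.exp_pos _).le]
    calc (∫⁻ z, ENNReal.ofReal (Real.exp (lam * T z) * p z))
        ≤ ∫⁻ z, (ENNReal.ofReal C * ENNReal.ofReal (Real.exp (l * z) * p z)
            + ENNReal.ofReal D * ENNReal.ofReal (p z)) := lintegral_mono hb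
      _ = ENNReal.ofReal C * (∫⁻ z, ENNReal.ofReal (Real.exp (l * z) * p z))
            + ENNReal.ofReal D * (∫⁻ z, ENNReal.ofReal (p z)) := by
          rw [lintegral_add_left, lintegral_const_mul, lintegral_const_mul]
          · exact hp_meas.ennreal_ofReal
          · fun_prop
          · fun_prop
      _ < ⊤ := by
          rw [hp_prob]
          exact ENNReal.add_lt_top.mpr
            ⟨ENNReal.mul_lt_top ENNReal.ofReal_lt_top hp_int,
             ENNReal.mul_lt_top ENNReal.ofReal_lt_top (by simp)⟩
  have := hq_heavy lam hlam_pos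
  rw [key] at this
  exact absurd this hfin.ne
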